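/- arXiv:0910.0120 — 2 statements merged into one kernel-verified Lean document; each statement's English description precedes it below -/
import Mathlib

section
/- With e_\delta(n) defined as the Stasheff-polytope sum e_\delta(n) = \sum_{\lambda \vdash n-2} P(\lambda) \prod_i e(i+2)^{\lambda_i} (where e(m) = \prod_{j=2}^{m-2}(q-j)), the ordinary generating series f(x) = x - \sum_{n\ge 2} e(n+1) x^n and f_\delta(x) = x + \sum_{n\ge 2} e_\delta(n+1) x^n satisfy f(f_\delta(x)) = f_\delta(f(x)) = x in \mathbb{Q}[q][[x]]. -/
open Finset

/-- `e(m) = ∏_{j=2}^{m-2} (q - j)`, the Poincaré polynomial of `M_{0,m}`. -/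
noncomputable def eOpen (m : ℕ) : Polynomial ℚ :=
  ∏ j ∈ Finset.Icc 2 (m - 2), (Polynomial.X - (j : Polynomial ℚ))

/-- `P(λ) = (n-2+∑ᵢ λᵢ)! / ((n-1)! ∏ᵢ λᵢ!)` for a partition `λ ⊢ n-2`. -/
noncomputable def Pcoeff (n : ℕ) (lam : Nat.Partition (n - 2)) : ℚ :=
  ((n - 2 + lam.parts.card).factorial : ℚ) /
    (((n - 1).factorial : ℚ) * ∏ i ∈ Finset.Icc 1 (n - 2), ((lam.parts.count i).factorial : ℚ))

/-- `e_δ(n) = ∑_{λ ⊢ n-2} P(λ) ∏ᵢ e(i+2)^{λᵢ}`. -/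
noncomputable def eDelta (n : ℕ) : Polynomial ℚ :=
  ∑ lam : Nat.Partition (n - 2),
    Pcoeff n lam • ∏ i ∈ Finset.Icc 1 (n - 2), (eOpen (i + 2)) ^ (lam.parts.count i)

open PowerSeries in
/-- Composition of formal power series (intended for second argument with zero
constant coefficient). -/
noncomputable def PS.comp {R : Type*} [CommRing R] (f g : PowerSeries R) : PowerSeries R :=
  PowerSeries.mk fun n => ∑ k ∈ Finset.range (n + 1), (coeff k f) * coeff n (g ^ k)

/-- `f(x) = x - ∑_{n≥2} e(n+1) xⁿ`. -/
noncomputable def fSeries : PowerSeries (Polynomial ℚ) :=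
  PowerSeries.mk fun n => if n = 0 then 0 else if n = 1 then 1 else -(eOpen (n + 1))

/-- `f_δ(x) = x + ∑_{n≥2} e_δ(n+1) xⁿ`. -/
noncomputable def fDeltaSeries : PowerSeries (Polynomial ℚ) :=
  PowerSeries.mk fun n => if n = 0 then 0 else if n = 1 then 1 else eDelta (n + 1)


set_option linter.unusedSectionVars false
set_option maxHeartbeats 1000000

namespace PS
open PowerSeries

variable {R : Type*} [CommRing R]

theorem coeff_comp (f g : PowerSeries R) (n : ℕ) :
    coeff n (PS.comp f g) = ∑ k ∈ range (n+1), coeff k f * coeff n (g ^ k) := by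
  simp [PS.comp]

theorem coeff_pow_eq_zero {h : PowerSeries R} (hh : constantCoeff h = 0)
    {q j : ℕ} (hqj : q < j) : coeff q (h ^ j) = 0 := by
  obtain ⟨s, rfl⟩ := (PowerSeries.X_dvd_iff).2 hh
  rw [mul_pow, coeff_X_pow_mul', if_neg (by omega)]

theorem comp_one_left (h : PowerSeries R) : PS.comp 1 h = 1 := by
  ext n
  rw [coeff_comp]
  rw [Finset.sum_eq_single 0 (fun k _ hk => by rw [coeff_one, if_neg hk, zero_mul])
    (fun h => absurd (mem_range.2 (Nat.succ_pos n)) h)]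
  simp

/-- auxiliary triangle-to-square sum lemma -/
theorem sum_triangle_eq_sum_square {M : Type*} [AddCommMonoid M] {n : ℕ} {F : ℕ × ℕ → M}
    (hF : ∀ ij : ℕ × ℕ, n < ij.1 + ij.2 → F ij = 0) :
    ∑ k ∈ range (n+1), ∑ ij ∈ Finset.HasAntidiagonal.antidiagonal k, F ij
      = ∑ ij ∈ range (n+1) ×ˢ range (n+1), F ij := by
  have h1 : ∑ ij ∈ range (n+1) ×ˢ range (n+1), F ij
      = ∑ ij ∈ (range (n+1) ×ˢ range (n+1)).filter (fun ij => ij.1 + ij.2 ≤ n), F ij := by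
    rw [Finset.sum_filter_of_ne]
    intro x _ hx
    by_contra hc
    exact hx (hF x (by omega))
  rw [h1, ← Finset.sum_fiberwise_of_maps_to (g := fun ij : ℕ × ℕ => ij.1 + ij.2) (t := range (n+1))
    (fun x hx => by simp only [mem_filter] at hx; show x.1 + x.2 ∈ _; exact mem_range.2 (by omega))]
  apply Finset.sum_congr rfl
  intro k hk
  rw [mem_range] at hk
  apply Finset.sum_congr _ (fun _ _ => rfl)
  ext ij
  simp only [mem_filter, mem_product, mem_range, Finset.HasAntidiagonal.mem_antidiagonal]
  constructor
  · intro h'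
    exact ⟨⟨⟨by omega, by omega⟩, by omega⟩, h'⟩
  · exact fun h' => h'.2

theorem comp_mul_left {h : PowerSeries R} (hh : constantCoeff h = 0) (f g : PowerSeries R) :
    PS.comp (f * g) h = PS.comp f h * PS.comp g h := by
  ext n
  rw [coeff_comp, coeff_mul]
  have key : ∀ side : Unit, True := fun _ => trivial
  -- LHS
  have hL : ∑ k ∈ range (n+1), coeff k (f*g) * coeff n (h ^ k)
      = ∑ ij ∈ range (n+1) ×ˢ range (n+1),
          coeff ij.1 f * coeff ij.2 g * coeff n (h ^ (ij.1 + ij.2)) := by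
    rw [← sum_triangle_eq_sum_square (fun ij hij => by
      rw [coeff_pow_eq_zero hh hij, mul_zero])]
    apply Finset.sum_congr rfl
    intro k _
    rw [coeff_mul, Finset.sum_mul]
    apply Finset.sum_congr rfl
    intro ij hij
    rw [Finset.HasAntidiagonal.mem_antidiagonal] at hij
    rw [hij]
  rw [hL]
  -- RHS
  have hR : ∀ pq : ℕ × ℕ, pq ∈ Finset.HasAntidiagonal.antidiagonal n →
      coeff pq.1 (PS.comp f h) * coeff pq.2 (PS.comp g h)
        = ∑ ij ∈ range (n+1) ×ˢ range (n+1),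
            coeff ij.1 f * coeff ij.2 g * (coeff pq.1 (h ^ ij.1) * coeff pq.2 (h ^ ij.2)) := by
    intro pq hpq
    rw [Finset.HasAntidiagonal.mem_antidiagonal] at hpq
    rw [coeff_comp, coeff_comp]
    have e1 : ∑ k ∈ range (pq.1+1), coeff k f * coeff pq.1 (h ^ k)
        = ∑ k ∈ range (n+1), coeff k f * coeff pq.1 (h ^ k) := by
      apply Finset.sum_subset (by intro x hx; simp only [mem_range] at *; omega)
      intro x _ hx
      rw [coeff_pow_eq_zero hh (by simp only [mem_range] at *; omega), mul_zero]
    have e2 : ∑ k ∈ range (pq.2+1), coeff k g * coeff pq.2 (h ^ k)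
        = ∑ k ∈ range (n+1), coeff k g * coeff pq.2 (h ^ k) := by
      apply Finset.sum_subset (by intro x hx; simp only [mem_range] at *; omega)
      intro x _ hx
      rw [coeff_pow_eq_zero hh (by simp only [mem_range] at *; omega), mul_zero]
    rw [e1, e2, Finset.sum_mul_sum]
    rw [← Finset.sum_product']
    apply Finset.sum_congr rfl
    intro ij _
    ring
  rw [Finset.sum_congr rfl hR, Finset.sum_comm]
  apply Finset.sum_congr rfl
  intro ij _
  rw [← Finset.mul_sum, pow_add, coeff_mul]

theorem comp_pow {h : PowerSeries R} (hh : constantCoeff h = 0) (f : PowerSeries R) (m : ℕ) :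
    PS.comp (f ^ m) h = (PS.comp f h) ^ m := by
  induction m with
  | zero => simpa using comp_one_left h
  | succ m ih => rw [pow_succ, comp_mul_left hh, ih, pow_succ]

theorem comp_assoc {f g h : PowerSeries R} (hg : constantCoeff g = 0)
    (hh : constantCoeff h = 0) :
    PS.comp (PS.comp f g) h = PS.comp f (PS.comp g h) := by
  ext n
  rw [coeff_comp, coeff_comp]
  have hL : ∑ k ∈ range (n+1), coeff k (PS.comp f g) * coeff n (h ^ k)
      = ∑ k ∈ range (n+1), ∑ m ∈ range (n+1),
          coeff m f * coeff k (g ^ m) * coeff n (h ^ k) := by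
    apply Finset.sum_congr rfl
    intro k hk
    rw [coeff_comp, Finset.sum_mul]
    apply Finset.sum_subset (by intro x hx; simp only [mem_range] at *; omega)
    intro x _ hx
    rw [coeff_pow_eq_zero hg (by simp only [mem_range] at *; omega), mul_zero, zero_mul]
  rw [hL, Finset.sum_comm]
  apply Finset.sum_congr rfl
  intro m _
  rw [← comp_pow hh, coeff_comp, Finset.mul_sum]
  apply Finset.sum_congr rfl
  intro k _
  ring

theorem comp_X_right (f : PowerSeries R) : PS.comp f X = f := by
  ext n
  rw [coeff_comp]
  rw [Finset.sum_eq_single n (fun k _ hk => by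
      rw [coeff_X_pow, if_neg (fun hc => hk hc.symm), mul_zero])
    (fun hn => absurd (mem_range.2 (Nat.lt_succ_self n)) hn)]
  rw [coeff_X_pow, if_pos rfl, mul_one]

theorem comp_X_left {f : PowerSeries R} (hf : constantCoeff f = 0) :
    PS.comp X f = f := by
  ext n
  rw [coeff_comp]
  rcases Nat.eq_zero_or_pos n with rfl | hn
  · simp [hf]
  · rw [Finset.sum_eq_single 1 (fun k _ hk => by
        rw [coeff_X, if_neg hk, zero_mul])
      (fun hn1 => absurd (mem_range.2 (by omega)) hn1)]
    rw [coeff_X, if_pos rfl, one_mul, pow_one]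

end PS

section Lagrange
open PowerSeries
variable {R : Type*} [CommRing R] [Algebra ℚ R]

theorem nsmul_cancel {m : ℕ} (hm : 0 < m) {a b : R} (h : m • a = m • b) : a = b := by
  have h2 : ((m:ℚ)) • a = ((m:ℚ)) • b := by
    rw [Nat.cast_smul_eq_nsmul, Nat.cast_smul_eq_nsmul]; exact h
  have := congrArg (fun x => ((m:ℚ)⁻¹) • x) h2
  simpa [smul_smul, inv_mul_cancel₀ (show (m:ℚ) ≠ 0 by positivity)] using this

variable (w : PowerSeries R)

/-- the inverse of `w` -/
noncomputable def uu : PowerSeries R := w.invOfUnit 1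

/-- derivative of `X * w` -/
noncomputable def Fd : PowerSeries R := w + X * w.derivativeFun

variable (hw : constantCoeff w = 1)
include hw

theorem w_mul_uu : w * uu w = 1 := mul_invOfUnit w 1 (by simpa using hw)

theorem uu_mul_w : uu w * w = 1 := by rw [mul_comm]; exact w_mul_uu w hw

theorem constantCoeff_uu : constantCoeff (uu w) = 1 := by
  simp [uu, constantCoeff_invOfUnit]

theorem uu_sq_dw : uu w ^ 2 * w.derivativeFun = -(uu w).derivativeFun := by
  have h := congrArg derivativeFun (w_mul_uu w hw)
  rw [derivativeFun_mul] at h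
  have h1 : derivativeFun (1 : PowerSeries R) = 0 := by
    have := derivativeFun_one (R := R)
    simpa using this
  rw [h1] at h
  -- h : w • (uu w).derivativeFun + (uu w) • w.derivativeFun = 0
  have h2 := congrArg (fun x => uu w * x) h
  simp only [smul_eq_mul, mul_add, mul_zero] at h2
  have h3 : uu w * (w * (uu w).derivativeFun) = (uu w).derivativeFun := by
    rw [← mul_assoc, uu_mul_w w hw, one_mul]
  rw [h3] at h2
  have : uu w * (uu w * w.derivativeFun) = uu w ^ 2 * w.derivativeFun := by ring
  rw [this] at h2
  linear_combination h2

theorem keyS (m : ℕ) : uu w ^ (m+2) * Fd w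
    = uu w ^ (m+1) - X * (uu w ^ m * (uu w).derivativeFun) := by
  have e1 : uu w ^ (m+2) * w = uu w ^ (m+1) := by
    have : uu w ^ (m+2) * w = uu w ^ (m+1) * (uu w * w) := by ring
    rw [this, uu_mul_w w hw, mul_one]
  have e2 : uu w ^ (m+2) * (X * w.derivativeFun)
      = X * (uu w ^ m * (uu w ^ 2 * w.derivativeFun)) := by ring
  rw [Fd, mul_add, e1, e2, uu_sq_dw w hw]
  ring_nf

omit hw

theorem mul_natCast_eq_smul (c : R) (n : ℕ) : c * (n : R) = ((n:ℚ)) • c := by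
  rw [Algebra.smul_def, map_natCast, mul_comm]

theorem DuPow (m : ℕ) : derivativeFun (uu w ^ (m+1))
    = (m+1) • (uu w ^ m * (uu w).derivativeFun) := by
  induction m with
  | zero => simp
  | succ m ih =>
    rw [pow_succ, derivativeFun_mul, ih]
    simp only [smul_eq_mul, nsmul_eq_mul]
    push_cast
    ring

theorem coeff_X_mul_D (P : PowerSeries R) (k : ℕ) :
    coeff k (X * P.derivativeFun) = coeff k P * (k : R) := by
  cases k with
  | zero => simp
  | succ q => rw [coeff_succ_X_mul, show P.derivativeFun = derivative R P from rfl, coeff_derivativeFun]; push_cast; ring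

theorem coeff_X_mul_pow_D (m k : ℕ) :
    coeff k (X * (uu w ^ m * (uu w).derivativeFun))
      = (((m:ℚ)+1))⁻¹ • (coeff k (uu w ^ (m+1)) * (k : R)) := by
  have h1 : (m+1) • coeff k (X * (uu w ^ m * (uu w).derivativeFun))
      = coeff k (uu w ^ (m+1)) * (k : R) := by
    rw [← map_nsmul, ← mul_smul_comm, ← DuPow, coeff_X_mul_D]
  rw [← h1, ← Nat.cast_smul_eq_nsmul ℚ, smul_smul]
  push_cast
  rw [inv_mul_cancel₀ (show ((m:ℚ)+1) ≠ 0 by positivity), one_smul]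

include hw

theorem keyK1 (d : ℕ) : coeff (d+1) (uu w ^ (d+2) * Fd w) = 0 := by
  rw [keyS w hw d, map_sub, coeff_X_mul_pow_D, mul_natCast_eq_smul, smul_smul]
  push_cast
  rw [inv_mul_cancel₀ (show ((d:ℚ)+1) ≠ 0 by positivity), one_smul, sub_self]

theorem keyK2 : coeff 0 (uu w * Fd w) = 1 := by
  rw [coeff_zero_eq_constantCoeff, map_mul, constantCoeff_uu w hw]
  have : constantCoeff (Fd w) = 1 := by
    rw [Fd, map_add, hw, ← coeff_zero_eq_constantCoeff, coeff_zero_X_mul, add_zero]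
  rw [this, one_mul]

theorem keyK3 (m : ℕ) : coeff m (uu w ^ (m+2) * Fd w)
    = (((m:ℚ)+1))⁻¹ • coeff m (uu w ^ (m+1)) := by
  rw [keyS w hw m, map_sub, coeff_X_mul_pow_D, mul_natCast_eq_smul, smul_smul]
  have h1 : (1:ℚ) - ((m:ℚ)+1)⁻¹ * (m:ℚ) = ((m:ℚ)+1)⁻¹ := by
    field_simp
    ring
  calc coeff m (uu w ^ (m+1)) - (((m:ℚ)+1)⁻¹ * (m:ℚ)) • coeff m (uu w ^ (m+1))
      = ((1:ℚ) - ((m:ℚ)+1)⁻¹ * (m:ℚ)) • coeff m (uu w ^ (m+1)) := by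
        rw [sub_smul, one_smul]
    _ = _ := by rw [h1]

end Lagrange

section CSeq
open PowerSeries
variable {R : Type*} [CommRing R] [Algebra ℚ R]

/-- Coefficients of the compositional inverse of `X * w`, defined recursively. -/
noncomputable def cSeq (w : PowerSeries R) : ℕ → R
  | N => coeff N X - ∑ j ∈ (range N).attach,
      cSeq w j.1 * coeff N ((X * w) ^ (j.1 : ℕ))
decreasing_by exact mem_range.mp j.2

theorem cSeq_def (w : PowerSeries R) (N : ℕ) :
    cSeq w N = coeff N X - ∑ j ∈ range N, cSeq w j * coeff N ((X * w) ^ j) := by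
  rw [cSeq, ← Finset.sum_attach (range N) (fun j => cSeq w j * coeff N ((X * w) ^ j))]

variable (w : PowerSeries R) (hw : constantCoeff w = 1)

theorem cSeq_zero : cSeq w 0 = 0 := by
  rw [cSeq_def]; simp

include hw

theorem coeff_XW_pow_self (N : ℕ) : coeff N ((X * w) ^ N) = 1 := by
  rw [mul_pow, coeff_X_pow_mul', if_pos le_rfl, Nat.sub_self,
    coeff_zero_eq_constantCoeff, map_pow, hw, one_pow]

theorem cSpec (N : ℕ) :
    coeff N X = ∑ j ∈ range (N+1), cSeq w j * coeff N ((X * w) ^ j) := by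
  rw [Finset.sum_range_succ, coeff_XW_pow_self w hw, mul_one, cSeq_def]
  ring

omit hw

theorem constantCoeff_XW : constantCoeff (X * w) = 0 := by
  rw [← coeff_zero_eq_constantCoeff, coeff_zero_X_mul]

theorem vanish_mul (P Q : PowerSeries R) (j : ℕ) (hP : ∀ N ≤ j, coeff N P = 0) :
    coeff j (P * Q) = 0 := by
  rw [coeff_mul]
  apply Finset.sum_eq_zero
  intro x hx
  rw [Finset.HasAntidiagonal.mem_antidiagonal] at hx
  rw [hP x.1 (by omega), zero_mul]

include hw

theorem DDvanish (j : ℕ) :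
    ∀ N ≤ j, coeff N (X - ∑ i ∈ range (j+1), C (cSeq w i) * (X * w) ^ i) = 0 := by
  intro N hN
  rw [map_sub, map_sum]
  have h1 : ∀ i ∈ range (j+1), coeff N (C (cSeq w i) * (X * w) ^ i)
      = cSeq w i * coeff N ((X * w) ^ i) := fun i _ => by rw [coeff_C_mul]
  rw [Finset.sum_congr rfl h1]
  have h2 : ∑ i ∈ range (j+1), cSeq w i * coeff N ((X * w) ^ i)
      = ∑ i ∈ range (N+1), cSeq w i * coeff N ((X * w) ^ i) := by
    symm
    apply Finset.sum_subset (by intro x hx; simp only [mem_range] at *; omega)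
    intro x _ hx
    rw [PS.coeff_pow_eq_zero (constantCoeff_XW w) (by simp only [mem_range] at *; omega),
      mul_zero]
  rw [h2, ← cSpec w hw, sub_self]

theorem ortho (i d : ℕ) :
    coeff (i + d) ((X * w) ^ i * (uu w ^ (i + d + 1) * Fd w))
      = if d = 0 then 1 else 0 := by
  have e1 : (X * w) ^ i * (uu w ^ (i + d + 1) * Fd w)
      = X ^ i * ((w * uu w) ^ i * (uu w ^ (d+1) * Fd w)) := by
    rw [mul_pow, mul_pow, pow_add]
    ring
  rw [e1, w_mul_uu w hw, one_pow, one_mul, add_comm i d, coeff_X_pow_mul]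
  cases d with
  | zero => rw [if_pos rfl, pow_one, keyK2 w hw]
  | succ d' => rw [if_neg (Nat.succ_ne_zero d'), show d' + 1 + 1 = d' + 2 by omega,
      keyK1 w hw d']

theorem cSeq_eq_res (j : ℕ) : cSeq w (j+1) = coeff j (uu w ^ (j+2) * Fd w) := by
  have hvan := vanish_mul (X - ∑ i ∈ range (j+2), C (cSeq w i) * (X * w) ^ i)
    (uu w ^ (j+2) * Fd w) (j+1) (DDvanish w hw (j+1))
  rw [sub_mul, Finset.sum_mul, map_sub, map_sum, coeff_succ_X_mul] at hvan
  have h1 : ∀ i ∈ range (j+2), coeff (j+1) (C (cSeq w i) * (X * w) ^ i * (uu w ^ (j+2) * Fd w))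
      = cSeq w i * (if j + 1 - i = 0 then 1 else 0) := by
    intro i hi
    rw [mem_range] at hi
    obtain ⟨d, hd⟩ : ∃ d, j + 1 = i + d := ⟨j + 1 - i, by omega⟩
    rw [mul_assoc, coeff_C_mul]
    congr 1
    calc coeff (j+1) ((X * w) ^ i * (uu w ^ (j+2) * Fd w))
        = coeff (i+d) ((X * w) ^ i * (uu w ^ (i+d+1) * Fd w)) := by
          rw [show j + 2 = j + 1 + 1 from rfl]
          rw [hd]
      _ = if d = 0 then 1 else 0 := ortho w hw i d
      _ = if j + 1 - i = 0 then 1 else 0 := by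
          congr 1
          simp only [eq_iff_iff]
          omega
  rw [Finset.sum_congr rfl h1] at hvan
  have h2 : ∑ i ∈ range (j+2), cSeq w i * (if j + 1 - i = 0 then 1 else 0) = cSeq w (j+1) := by
    rw [Finset.sum_eq_single (j+1)]
    · simp
    · intro i hi hne
      rw [mem_range] at hi
      rw [if_neg (by omega), mul_zero]
    · intro h; exact absurd (mem_range.2 (by omega)) h
  rw [h2] at hvan
  exact (sub_eq_zero.mp hvan).symm

theorem cSeq_formula (j : ℕ) :
    cSeq w (j+1) = (((j:ℚ)+1))⁻¹ • coeff j (uu w ^ (j+1)) := by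
  rw [cSeq_eq_res w hw j, keyK3 w hw j]

theorem cSeq_one : cSeq w 1 = 1 := by
  rw [show (1:ℕ) = 0 + 1 from rfl, cSeq_formula w hw 0]
  simp only [Nat.cast_zero, zero_add, pow_one, inv_one, one_smul]
  rw [coeff_zero_eq_constantCoeff, constantCoeff_uu w hw]

theorem lagrange_left :
    PS.comp (PowerSeries.mk fun k => cSeq w k) (X * w) = X := by
  ext N
  rw [PS.coeff_comp, cSpec w hw N]
  apply Finset.sum_congr rfl
  intro k _
  rw [coeff_mk]

end CSeq

section Comb
open PowerSeries
variable {R : Type*} [CommRing R] [Algebra ℚ R]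

/-- multinomial weight of a multiset -/
noncomputable def mq (s : Multiset ℕ) : ℚ :=
  (s.card).factorial / ∏ i ∈ s.toFinset, ((s.count i).factorial : ℚ)

noncomputable def Phi (a : ℕ → R) (s : Multiset ℕ) : R := (s.map a).prod

theorem prod_count_factorial_subset (s : Multiset ℕ) (F : Finset ℕ) (hF : s.toFinset ⊆ F) :
    ∏ i ∈ F, ((s.count i).factorial : ℚ) = ∏ i ∈ s.toFinset, ((s.count i).factorial : ℚ) := by
  symm
  apply Finset.prod_subset hF
  intro x _ hx
  rw [Multiset.count_eq_zero_of_notMem (fun hc => hx (Multiset.mem_toFinset.2 hc))]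
  simp

theorem prod_count_factorial_pos (s : Multiset ℕ) :
    0 < ∏ i ∈ s.toFinset, ((s.count i).factorial : ℚ) := by
  apply Finset.prod_pos
  intro i _
  exact_mod_cast Nat.factorial_pos _

theorem mq_pos (s : Multiset ℕ) : 0 < mq s := by
  apply div_pos (by exact_mod_cast Nat.factorial_pos _) (prod_count_factorial_pos s)

theorem prod_count_factorial_erase (s : Multiset ℕ) (q : ℕ) (hq : q ∈ s) :
    (s.count q : ℚ) * ∏ i ∈ s.toFinset, (((s.erase q).count i).factorial : ℚ)
      = ∏ i ∈ s.toFinset, ((s.count i).factorial : ℚ) := by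
  have hqF : q ∈ s.toFinset := Multiset.mem_toFinset.2 hq
  rw [← Finset.mul_prod_erase _ _ hqF, ← Finset.mul_prod_erase _ (fun i => ((s.count i).factorial : ℚ)) hqF]
  have h1 : ∀ i ∈ s.toFinset.erase q, (((s.erase q).count i).factorial : ℚ)
      = ((s.count i).factorial : ℚ) := by
    intro i hi
    rw [Multiset.count_erase_of_ne (Finset.ne_of_mem_erase hi)]
  rw [Finset.prod_congr rfl h1, Multiset.count_erase_self, ← mul_assoc]
  congr 1
  have hc : 0 < s.count q := Multiset.count_pos.2 hq
  rw [← Nat.cast_mul, Nat.mul_factorial_pred hc.ne']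

theorem mq_erase (s : Multiset ℕ) (q : ℕ) (hq : q ∈ s) :
    mq (s.erase q) = ((s.count q : ℚ) / (s.card : ℚ)) * mq s := by
  have hcard : 0 < s.card := Multiset.card_pos.2 (fun h => by simp [h] at hq)
  rw [mq, mq, Multiset.card_erase_of_mem hq,
    ← prod_count_factorial_subset (s.erase q) s.toFinset
      (Multiset.toFinset_subset.2 (Multiset.subset_of_le (Multiset.erase_le q s)))]
  have hfac : ((s.card : ℚ)) * (((s.card).pred).factorial : ℚ) = (s.card.factorial : ℚ) := by
    have h := Nat.mul_factorial_pred hcard.ne'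
    rw [Nat.pred_eq_sub_one]
    exact_mod_cast h
  have hprod := prod_count_factorial_pos s
  have hprod2 := prod_count_factorial_pos (s.erase q)
  rw [← prod_count_factorial_subset (s.erase q) s.toFinset
      (Multiset.toFinset_subset.2 (Multiset.subset_of_le (Multiset.erase_le q s)))] at hprod2
  have hcq : (0:ℚ) < s.count q := by exact_mod_cast Multiset.count_pos.2 hq
  have hcc : (0:ℚ) < (s.card : ℚ) := by exact_mod_cast hcard
  have herase := prod_count_factorial_erase s q hq
  rw [div_mul_div_comm, div_eq_div_iff (by positivity) (by positivity)]
  linear_combination (-(((s.card:ℚ)) * (((s.card).pred).factorial:ℚ))) * herase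
    + ((s.count q:ℚ) * ∏ i ∈ s.toFinset, (((s.erase q).count i).factorial : ℚ)) * hfac

theorem mq_sum_erase (s : Multiset ℕ) (hs : s ≠ 0) :
    ∑ q ∈ s.toFinset, mq (s.erase q) = mq s := by
  have hcard : 0 < s.card := Multiset.card_pos.2 hs
  have h1 : ∀ q ∈ s.toFinset, mq (s.erase q) = ((s.count q : ℚ) / (s.card : ℚ)) * mq s := by
    intro q hq
    exact mq_erase s q (Multiset.mem_toFinset.1 hq)
  rw [Finset.sum_congr rfl h1, ← Finset.sum_mul, ← Finset.sum_div]
  have h2 : ∑ q ∈ s.toFinset, (s.count q : ℚ) = (s.card : ℚ) := by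
    exact_mod_cast congrArg (Nat.cast : ℕ → ℚ) (Multiset.toFinset_sum_count_eq s)
  rw [h2, div_self (by exact_mod_cast hcard.ne'), one_mul]

theorem phi_erase (a : ℕ → R) (s : Multiset ℕ) (q : ℕ) (hq : q ∈ s) :
    a q * Phi a (s.erase q) = Phi a s := by
  rw [Phi, Phi, ← Multiset.prod_map_erase (f := a) hq]

theorem inner_sum_lemma (a : ℕ → R) (s : Multiset ℕ) (hs : s ≠ 0) :
    ∑ q ∈ s.toFinset, mq (s.erase q) • (Phi a (s.erase q) * a q) = mq s • Phi a s := by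
  have h1 : ∀ q ∈ s.toFinset, mq (s.erase q) • (Phi a (s.erase q) * a q)
      = mq (s.erase q) • Phi a s := by
    intro q hq
    rw [mul_comm, phi_erase a s q (Multiset.mem_toFinset.1 hq)]
  rw [Finset.sum_congr rfl h1, ← Finset.sum_smul, mq_sum_erase s hs]

end Comb
section Comb2
open PowerSeries
variable {R : Type*} [CommRing R] [Algebra ℚ R]

/-- power series with coefficients `a m` for `m ≥ 1` -/
noncomputable def Ah (a : ℕ → R) : PowerSeries R :=
  PowerSeries.mk fun m => if m = 0 then 0 else a m

theorem constantCoeff_Ah (a : ℕ → R) : constantCoeff (Ah a) = 0 := by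
  rw [← coeff_zero_eq_constantCoeff, Ah, coeff_mk, if_pos rfl]

/-- multisets of `j` positive integers summing to `n` -/
noncomputable def MS (j n : ℕ) : Finset (Multiset ℕ) :=
  Finset.image (fun lam : Nat.Partition n => lam.parts)
    (Finset.univ.filter (fun lam : Nat.Partition n => lam.parts.card = j))

theorem mem_MS {j n : ℕ} {s : Multiset ℕ} :
    s ∈ MS j n ↔ s.card = j ∧ s.sum = n ∧ ∀ x ∈ s, 0 < x := by
  constructor
  · rintro hs
    rw [MS, Finset.mem_image] at hs
    obtain ⟨lam, hlam, rfl⟩ := hs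
    rw [Finset.mem_filter] at hlam
    exact ⟨hlam.2, lam.parts_sum, fun x hx => lam.parts_pos hx⟩
  · rintro ⟨h1, h2, h3⟩
    rw [MS, Finset.mem_image]
    exact ⟨⟨s, fun {x} hx => h3 _ hx, h2⟩, Finset.mem_filter.2 ⟨Finset.mem_univ _, h1⟩, rfl⟩

theorem coeff_Ah_pow (a : ℕ → R) : ∀ j n, coeff n (Ah a ^ j) = ∑ s ∈ MS j n, mq s • Phi a s := by
  intro j
  induction j with
  | zero =>
    intro n
    rcases Nat.eq_zero_or_pos n with rfl | hn
    · rw [pow_zero, coeff_zero_eq_constantCoeff, map_one]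
      have h00 : MS 0 0 = {(0 : Multiset ℕ)} := by
        ext s
        simp only [mem_MS, Finset.mem_singleton]
        constructor
        · rintro ⟨h1, _, _⟩; exact Multiset.card_eq_zero.1 h1
        · rintro rfl; simp
      rw [h00, Finset.sum_singleton]
      simp [mq, Phi]
    · have h0 : MS 0 n = ∅ := by
        ext s
        simp only [mem_MS, Finset.notMem_empty, iff_false]
        rintro ⟨h1, h2, _⟩
        rw [Multiset.card_eq_zero.1 h1] at h2
        simp at h2
        omega
      rw [pow_zero, h0, Finset.sum_empty, coeff_one, if_neg (by omega)]
  | succ j ih =>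
    intro n
    rw [pow_succ, coeff_mul, Finset.Nat.sum_antidiagonal_eq_sum_range_succ_mk]
    have hstep : ∀ k ∈ range (n+1), coeff k (Ah a ^ j) * coeff (n-k) (Ah a)
        = if k < n then ∑ s ∈ MS j k, mq s • (Phi a s * a (n-k)) else 0 := by
      intro k hk
      rw [mem_range] at hk
      by_cases hkn : k < n
      · rw [if_pos hkn, ih k, Ah, coeff_mk, if_neg (by omega), Finset.sum_mul]
        exact Finset.sum_congr rfl fun s _ => smul_mul_assoc _ _ _
      · have : k = n := by omega
        subst this
        rw [if_neg hkn, Nat.sub_self, Ah, coeff_mk, if_pos rfl, mul_zero]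
    rw [Finset.sum_congr rfl hstep, Finset.sum_range_succ, if_neg (lt_irrefl n), add_zero]
    have hins : ∀ k ∈ range n, (if k < n then ∑ s ∈ MS j k, mq s • (Phi a s * a (n-k)) else 0)
        = ∑ s ∈ MS j k, mq s • (Phi a s * a (n-k)) := fun k hk => if_pos (mem_range.1 hk)
    rw [Finset.sum_congr rfl hins]
    -- right side: expand via inner_sum_lemma
    have hrhs : ∀ s ∈ MS (j+1) n, mq s • Phi a s
        = ∑ q ∈ s.toFinset, mq (s.erase q) • (Phi a (s.erase q) * a q) := by
      intro s hs
      rw [mem_MS] at hs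
      refine (inner_sum_lemma a s ?_).symm
      intro hc
      rw [hc] at hs
      simp at hs
    rw [Finset.sum_congr rfl hrhs]
    -- now a bijection between sigma sets
    rw [← Finset.sum_sigma ((range n)) (fun k => MS j k)
        (fun p => mq p.2 • (Phi a p.2 * a (n - p.1))),
      ← Finset.sum_sigma (MS (j+1) n) (fun s => s.toFinset)
        (fun r => mq (r.1.erase r.2) • (Phi a (r.1.erase r.2) * a r.2))]
    apply Finset.sum_nbij' (i := fun p => (⟨(n - p.1) ::ₘ p.2, n - p.1⟩ : (_ : Multiset ℕ) × ℕ))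
      (j := fun r => (⟨n - r.2, r.1.erase r.2⟩ : (_ : ℕ) × Multiset ℕ))
    · rintro ⟨k, s⟩ hp
      rw [Finset.mem_sigma] at hp
      obtain ⟨hk, hs⟩ := hp
      rw [mem_range] at hk
      have hk' : k < n := hk
      rw [mem_MS] at hs
      have hs' : Multiset.card s = j ∧ s.sum = k ∧ ∀ x ∈ s, 0 < x := hs
      refine Finset.mem_sigma.2 ⟨?_, ?_⟩
      · show ((n - k) ::ₘ s) ∈ MS (j+1) n
        rw [mem_MS]
        refine ⟨by rw [Multiset.card_cons, hs'.1], ?_, ?_⟩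
        · rw [Multiset.sum_cons, hs'.2.1]; omega
        · intro x hx
          rcases Multiset.mem_cons.1 hx with rfl | hx'
          · omega
          · exact hs'.2.2 x hx'
      · show (n - k) ∈ ((n - k) ::ₘ s).toFinset
        exact Multiset.mem_toFinset.2 (Multiset.mem_cons_self _ _)
    · rintro ⟨s, q⟩ hr
      rw [Finset.mem_sigma] at hr
      obtain ⟨hs, hq⟩ := hr
      rw [mem_MS] at hs
      rw [Multiset.mem_toFinset] at hq
      have hs' : Multiset.card s = j + 1 ∧ s.sum = n ∧ ∀ x ∈ s, 0 < x := hs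
      have hq' : q ∈ s := hq
      have hqpos : 0 < q := hs'.2.2 q hq'
      have hqle : q ≤ n := by
        rw [← hs'.2.1]
        exact Multiset.single_le_sum (fun x _ => Nat.zero_le x) q hq'
      have hsum := congrArg Multiset.sum (Multiset.cons_erase hq')
      rw [Multiset.sum_cons, hs'.2.1] at hsum
      refine Finset.mem_sigma.2 ⟨?_, ?_⟩
      · show (n - q) ∈ range n
        rw [mem_range]; omega
      · show (s.erase q) ∈ MS j (n - q)
        rw [mem_MS]
        refine ⟨by rw [Multiset.card_erase_of_mem hq', hs'.1]; rfl, by omega,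
          fun x hx => hs'.2.2 x (Multiset.mem_of_mem_erase hx)⟩
    · rintro ⟨k, s⟩ hp
      rw [Finset.mem_sigma] at hp
      have hk := mem_range.1 hp.1
      have hk' : k < n := hk
      show (⟨n - (n - k), ((n - k) ::ₘ s).erase (n - k)⟩ : (_ : ℕ) × Multiset ℕ) = ⟨k, s⟩
      have h1 : n - (n - k) = k := by omega
      rw [Multiset.erase_cons_head, h1]
    · rintro ⟨s, q⟩ hr
      rw [Finset.mem_sigma] at hr
      obtain ⟨hs, hq⟩ := hr
      rw [mem_MS] at hs
      rw [Multiset.mem_toFinset] at hq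
      have hs' : Multiset.card s = j + 1 ∧ s.sum = n ∧ ∀ x ∈ s, 0 < x := hs
      have hq' : q ∈ s := hq
      have hqle : q ≤ n := by
        rw [← hs'.2.1]
        exact Multiset.single_le_sum (fun x _ => Nat.zero_le x) q hq'
      show (⟨(n - (n - q)) ::ₘ (s.erase q), n - (n - q)⟩ : (_ : Multiset ℕ) × ℕ) = ⟨s, q⟩
      have h1 : n - (n - q) = q := by omega
      rw [h1, Multiset.cons_erase hq']
    · rintro ⟨k, s⟩ hp
      show mq s • (Phi a s * a (n - k))
          = mq (((n - k) ::ₘ s).erase (n - k)) • (Phi a (((n - k) ::ₘ s).erase (n - k)) * a (n - k))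
      rw [Multiset.erase_cons_head]

end Comb2

section NegBinom
open PowerSeries
variable {R : Type*} [CommRing R] [Algebra ℚ R]

noncomputable def wwA (a : ℕ → R) : PowerSeries R := 1 - Ah a

theorem constantCoeff_wwA (a : ℕ → R) : constantCoeff (wwA a) = 1 := by
  rw [wwA, map_sub, map_one, constantCoeff_Ah, sub_zero]

noncomputable def VN (a : ℕ → R) (N : ℕ) : PowerSeries R :=
  PowerSeries.mk fun m => ∑ j ∈ range (m+1), Nat.choose (N+j-1) j • coeff m (Ah a ^ j)

theorem VN_zero (a : ℕ → R) : VN a 0 = 1 := by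
  ext m
  rw [VN, coeff_mk]
  rw [Finset.sum_eq_single 0]
  · simp
  · intro j _ hj
    rw [Nat.choose_eq_zero_of_lt (by omega), zero_smul]
  · intro h; exact absurd (mem_range.2 (Nat.succ_pos m)) h

theorem ww_mul_VN_succ (a : ℕ → R) (N : ℕ) : wwA a * VN a (N+1) = VN a N := by
  ext m
  rw [wwA, sub_mul, one_mul, map_sub]
  have cAhV : coeff m (Ah a * VN a (N+1))
      = ∑ j ∈ range (m+1), Nat.choose (N+j) j • coeff m (Ah a ^ (j+1)) := by
    rw [coeff_mul, Finset.Nat.sum_antidiagonal_eq_sum_range_succ_mk]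
    have h1 : ∀ k ∈ range (m+1), coeff k (Ah a) * coeff (m-k) (VN a (N+1))
        = ∑ j ∈ range (m+1), Nat.choose (N+j) j • (coeff k (Ah a) * coeff (m-k) (Ah a ^ j)) := by
      intro k hk
      rw [mem_range] at hk
      rw [VN, coeff_mk, Finset.mul_sum]
      have e0 : ∀ j ∈ range (m-k+1), coeff k (Ah a) * (Nat.choose (N+1+j-1) j • coeff (m-k) (Ah a ^ j))
          = Nat.choose (N+j) j • (coeff k (Ah a) * coeff (m-k) (Ah a ^ j)) := by
        intro j _
        rw [mul_smul_comm]
        congr 2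
        omega
      rw [Finset.sum_congr rfl e0]
      apply Finset.sum_subset (by intro x hx; simp only [mem_range] at *; omega)
      intro x _ hx
      rw [PS.coeff_pow_eq_zero (constantCoeff_Ah a) (by simp only [mem_range] at *; omega),
        mul_zero, smul_zero]
    rw [Finset.sum_congr rfl h1, Finset.sum_comm]
    apply Finset.sum_congr rfl
    intro j _
    rw [← Finset.smul_sum]
    congr 1
    rw [pow_succ' (Ah a) j, coeff_mul, Finset.Nat.sum_antidiagonal_eq_sum_range_succ_mk]
  rw [cAhV, VN, VN, coeff_mk, coeff_mk]
  have hL1 : ∑ j ∈ range (m+1), Nat.choose (N+1+j-1) j • coeff m (Ah a ^ j)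
      = coeff m (Ah a ^ 0)
        + ∑ j ∈ range m, (Nat.choose (N+j) j + Nat.choose (N+j) (j+1)) • coeff m (Ah a ^ (j+1)) := by
    rw [Finset.sum_range_succ']
    rw [add_comm]
    congr 1
    · simp
    · apply Finset.sum_congr rfl
      intro j _
      have h3 : N + 1 + (j+1) - 1 = (N+j)+1 := by omega
      rw [h3, Nat.choose_succ_succ]
  have hL2 : ∑ j ∈ range (m+1), Nat.choose (N+j) j • coeff m (Ah a ^ (j+1))
      = ∑ j ∈ range m, Nat.choose (N+j) j • coeff m (Ah a ^ (j+1)) := by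
    rw [Finset.sum_range_succ, PS.coeff_pow_eq_zero (constantCoeff_Ah a) (by omega), smul_zero,
      add_zero]
  have hR : ∑ j ∈ range (m+1), Nat.choose (N+j-1) j • coeff m (Ah a ^ j)
      = coeff m (Ah a ^ 0) + ∑ j ∈ range m, Nat.choose (N+j) (j+1) • coeff m (Ah a ^ (j+1)) := by
    rw [Finset.sum_range_succ', add_comm]
    congr 1
    simp
  rw [hL1, hL2, hR]
  rw [add_sub_assoc]
  congr 1
  rw [← Finset.sum_sub_distrib]
  apply Finset.sum_congr rfl
  intro j _
  rw [add_smul]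
  ring

theorem ww_pow_mul_VN (a : ℕ → R) (N : ℕ) : wwA a ^ N * VN a N = 1 := by
  induction N with
  | zero => rw [pow_zero, one_mul, VN_zero]
  | succ N ih =>
    calc wwA a ^ (N+1) * VN a (N+1) = wwA a ^ N * (wwA a * VN a (N+1)) := by ring
      _ = wwA a ^ N * VN a N := by rw [ww_mul_VN_succ]
      _ = 1 := ih

theorem uu_pow_eq_VN (a : ℕ → R) (N : ℕ) : uu (wwA a) ^ N = VN a N := by
  have h1 : uu (wwA a) ^ N * (wwA a ^ N * VN a N) = uu (wwA a) ^ N := by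
    rw [ww_pow_mul_VN, mul_one]
  calc uu (wwA a) ^ N = uu (wwA a) ^ N * (wwA a ^ N * VN a N) := h1.symm
    _ = (uu (wwA a) * wwA a) ^ N * VN a N := by rw [mul_pow]; ring
    _ = VN a N := by rw [uu_mul_w (wwA a) (constantCoeff_wwA a), one_pow, one_mul]

end NegBinom

section Assembly
open PowerSeries
variable {R : Type*} [CommRing R] [Algebra ℚ R]

theorem multiset_card_le_sum (s : Multiset ℕ) (h : ∀ x ∈ s, 0 < x) : s.card ≤ s.sum := by
  induction s using Multiset.induction with
  | empty => simp
  | cons a s ih =>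
    rw [Multiset.card_cons, Multiset.sum_cons]
    have ha := h a (Multiset.mem_cons_self a s)
    have hs := ih (fun x hx => h x (Multiset.mem_cons_of_mem hx))
    omega

theorem sum_MS (i m : ℕ) (F : Multiset ℕ → R) :
    ∑ s ∈ MS i m, F s
      = ∑ lam ∈ Finset.univ.filter (fun lam : Nat.Partition m => lam.parts.card = i),
          F lam.parts := by
  rw [MS, Finset.sum_image]
  intro x _ y _ h
  exact Nat.Partition.ext h

theorem parts_toFinset_subset (m : ℕ) (lam : Nat.Partition m) :
    lam.parts.toFinset ⊆ Finset.Icc 1 m := by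
  intro x hx
  rw [Multiset.mem_toFinset] at hx
  rw [Finset.mem_Icc]
  constructor
  · exact lam.parts_pos hx
  · rw [← lam.parts_sum]
    exact Multiset.single_le_sum (fun y _ => Nat.zero_le y) x hx

theorem Phi_eq_prod (a : ℕ → R) (m : ℕ) (lam : Nat.Partition m) :
    Phi a lam.parts = ∏ i ∈ Finset.Icc 1 m, (a i) ^ (lam.parts.count i) := by
  rw [Phi, Finset.prod_multiset_map_count]
  apply Finset.prod_subset (parts_toFinset_subset m lam)
  intro x _ hx
  rw [Multiset.count_eq_zero_of_notMem (fun hc => hx (Multiset.mem_toFinset.2 hc)), pow_zero]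

theorem cSeq_partition_sum (a : ℕ → R) (m : ℕ) :
    cSeq (wwA a) (m+1) = ∑ lam : Nat.Partition m,
      (((m + lam.parts.card).factorial : ℚ) /
        (((m+1).factorial : ℚ) * ∏ i ∈ Finset.Icc 1 m, ((lam.parts.count i).factorial : ℚ))) •
      ∏ i ∈ Finset.Icc 1 m, (a i) ^ (lam.parts.count i) := by
  rw [cSeq_formula (wwA a) (constantCoeff_wwA a) m, uu_pow_eq_VN, VN, coeff_mk]
  have h1 : ∀ i ∈ range (m+1), Nat.choose (m+1+i-1) i • coeff m (Ah a ^ i)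
      = ∑ lam ∈ Finset.univ.filter (fun lam : Nat.Partition m => lam.parts.card = i),
          ((((m + lam.parts.card).factorial : ℚ) /
            ((m.factorial : ℚ) * ((lam.parts.card.factorial : ℚ)))) * mq lam.parts) •
            Phi a lam.parts := by
    intro i _
    rw [coeff_Ah_pow, sum_MS i m (fun s => mq s • Phi a s),
      ← Nat.cast_smul_eq_nsmul ℚ, Finset.smul_sum]
    apply Finset.sum_congr rfl
    intro lam hlam
    rw [Finset.mem_filter] at hlam
    rw [smul_smul]
    congr 1
    have hi : m + 1 + i - 1 = m + i := by omega
    rw [hi, hlam.2, Nat.cast_choose ℚ (show i ≤ m + i by omega), Nat.add_sub_cancel]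
    ring
  rw [Finset.sum_congr rfl h1]
  rw [Finset.sum_fiberwise_of_maps_to (g := fun lam : Nat.Partition m => lam.parts.card)
    (fun lam _ => by
      show Multiset.card lam.parts ∈ range (m+1)
      rw [mem_range]
      have := multiset_card_le_sum lam.parts (fun x hx => lam.parts_pos hx)
      rw [lam.parts_sum] at this
      omega)]
  rw [Finset.smul_sum]
  apply Finset.sum_congr rfl
  intro lam _
  rw [smul_smul, Phi_eq_prod a m lam]
  congr 1
  rw [mq, ← prod_count_factorial_subset lam.parts (Finset.Icc 1 m) (parts_toFinset_subset m lam)]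
  have hP : (0:ℚ) < ∏ i ∈ Finset.Icc 1 m, ((lam.parts.count i).factorial : ℚ) := by
    apply Finset.prod_pos; intro i _; exact_mod_cast Nat.factorial_pos _
  have hfs : (((m+1).factorial : ℕ) : ℚ) = ((m:ℚ)+1) * (m.factorial : ℚ) := by
    rw [Nat.factorial_succ]; push_cast; ring
  have hm1 : ((m:ℚ)+1) ≠ 0 := by positivity
  have hmf : ((m.factorial:ℚ)) ≠ 0 := by exact_mod_cast (Nat.factorial_pos m).ne'
  have hcf : ((lam.parts.card.factorial:ℚ)) ≠ 0 := by exact_mod_cast (Nat.factorial_pos _).ne'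
  rw [hfs]
  field_simp

end Assembly

section FinalProof
open PowerSeries

noncomputable def aF : ℕ → Polynomial ℚ := fun i => eOpen (i + 2)

theorem fSeries_eq : fSeries = PowerSeries.X * wwA aF := by
  refine PowerSeries.ext fun n => ?_
  rw [fSeries, coeff_mk]
  cases n with
  | zero => rw [if_pos rfl, coeff_zero_X_mul]
  | succ m =>
    rw [coeff_succ_X_mul, wwA, map_sub, Ah, coeff_mk]
    cases m with
    | zero => norm_num
    | succ p =>
      rw [if_neg (by omega), if_neg (by omega), if_neg (by omega), coeff_one,
        if_neg (by omega)]
      show -(eOpen (p + 1 + 1 + 1)) = 0 - aF (p + 1)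
      rw [zero_sub]
      rfl

theorem constantCoeff_fDelta : constantCoeff fDeltaSeries = 0 := by
  rw [← coeff_zero_eq_constantCoeff, fDeltaSeries, coeff_mk, if_pos rfl]

theorem constantCoeff_fS : constantCoeff fSeries = 0 := by
  rw [← coeff_zero_eq_constantCoeff, fSeries, coeff_mk, if_pos rfl]

theorem fDelta_eq : fDeltaSeries = PowerSeries.mk fun k => cSeq (wwA aF) k := by
  refine PowerSeries.ext fun n => ?_
  rw [coeff_mk, fDeltaSeries, coeff_mk]
  match n with
  | 0 => rw [if_pos rfl, cSeq_zero]
  | 1 =>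
    rw [if_neg one_ne_zero, if_pos rfl, cSeq_one (wwA aF) (constantCoeff_wwA aF)]
  | (j+2) =>
    rw [if_neg (by omega), if_neg (by omega)]
    show eDelta (j+2+1) = cSeq (wwA aF) (j+1+1)
    rw [cSeq_partition_sum aF (j+1)]
    rfl

theorem main_inversion' :
    PS.comp fSeries fDeltaSeries = PowerSeries.X ∧
    PS.comp fDeltaSeries fSeries = PowerSeries.X := by
  have h2 : PS.comp fDeltaSeries fSeries = PowerSeries.X := by
    rw [fDelta_eq, fSeries_eq]
    exact lagrange_left (wwA aF) (constantCoeff_wwA aF)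
  refine ⟨?_, h2⟩
  set w2 : PowerSeries (Polynomial ℚ) :=
    PowerSeries.mk fun m => PowerSeries.coeff (m+1) fDeltaSeries with hw2def
  have hGdecomp : fDeltaSeries = PowerSeries.X * w2 := by
    refine PowerSeries.ext fun n => ?_
    cases n with
    | zero =>
      rw [coeff_zero_X_mul, coeff_zero_eq_constantCoeff, constantCoeff_fDelta]
    | succ m => rw [coeff_succ_X_mul, hw2def, coeff_mk]
  have hw2 : constantCoeff w2 = 1 := by
    rw [← coeff_zero_eq_constantCoeff, hw2def, coeff_mk]
    rw [fDeltaSeries, coeff_mk]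
    norm_num
  have h1 : PS.comp (PowerSeries.mk fun k => cSeq w2 k) fDeltaSeries = PowerSeries.X := by
    conv_lhs => rw [hGdecomp]
    exact lagrange_left w2 hw2
  have ha := PS.comp_assoc (f := PowerSeries.mk fun k => cSeq w2 k)
    (g := fDeltaSeries) (h := fSeries) constantCoeff_fDelta constantCoeff_fS
  rw [h2, h1, PS.comp_X_left constantCoeff_fS, PS.comp_X_right] at ha
  rw [ha]
  exact h1

end FinalProof

theorem main_inversion :
    PS.comp fSeries fDeltaSeries = PowerSeries.X ∧
    PS.comp fDeltaSeries fSeries = PowerSeries.X := main_inversion'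
end

section
/- Define a_{n,2} as the coefficient of q^{n-5} in the polynomial e_\delta(n) = \sum_{\lambda\vdash n-2} P(\lambda)\prod_i e(i+2)^{\lambda_i} (notation as before, with e(m) = \prod_{j=2}^{m-2}(q-j) of degree m-3, so e_\delta(n) has degree n-3 and a_{n,i} is (-1)^i times the coefficient of q^{n-3-i}). Then a_{n,2} = \binom{n-1}{4} for all n \ge 5. -/
open Finset Polynomial

/-- sum of j for j in [2, x], as a rational. -/
noncomputable def sigq (x : ℕ) : ℚ := ∑ j ∈ Finset.Icc 2 x, (j : ℚ)

lemma sigq_succ (x : ℕ) : sigq (x + 1) = ((x:ℚ)+1)*((x:ℚ)+2)/2 - 1 := by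
  induction x with
  | zero => simp [sigq]
  | succ p ih =>
    have h : Finset.Icc 2 (p+2) = insert (p+2) (Finset.Icc 2 (p+1)) := by
      ext i; simp [Finset.mem_Icc, Finset.mem_insert]; omega
    have hnm : (p+2) ∉ Finset.Icc 2 (p+1) := by simp
    rw [sigq, h, Finset.sum_insert hnm, ← sigq, ih]
    push_cast; ring

lemma sum_sigq (K : ℕ) : ∑ j ∈ Finset.range K, sigq (j+1)
    = (K:ℚ)*((K:ℚ)^2+3*(K:ℚ)-4)/6 := by
  induction K with
  | zero => simp
  | succ p ih => rw [Finset.sum_range_succ, ih, sigq_succ]; push_cast; ring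

lemma sum_id_q (K : ℕ) : ∑ j ∈ Finset.range (K+1), (j:ℚ) = (K:ℚ)*((K:ℚ)+1)/2 := by
  induction K with
  | zero => simp
  | succ p ih => rw [Finset.sum_range_succ, ih]; push_cast; ring

lemma esymm_zero' (s : Multiset ℚ) : s.esymm 0 = 1 := by
  simp [Multiset.esymm]

lemma esymm_nil (k : ℕ) : (0 : Multiset ℚ).esymm (k+1) = 0 := by
  simp [Multiset.esymm, Multiset.powersetCard_zero_right]

lemma esymm_cons (a : ℚ) (s : Multiset ℚ) (k : ℕ) :
    (a ::ₘ s).esymm (k+1) = s.esymm (k+1) + a * s.esymm k := by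
  rw [Multiset.esymm, Multiset.powersetCard_cons, Multiset.map_add, Multiset.sum_add,
    Multiset.map_map, Multiset.esymm]
  congr 1
  rw [Multiset.esymm, ← Multiset.sum_map_mul_left]
  congr 1
  apply Multiset.map_congr rfl
  intro t _
  simp

lemma esymm_one' (s : Multiset ℚ) : s.esymm 1 = s.sum := by
  rw [Multiset.esymm, Multiset.powersetCard_one, Multiset.map_map]
  congr 1
  ext t
  simp [Function.comp]


noncomputable def Aset (p : ℕ) : Multiset ℚ := (Finset.Icc 2 p).val.map ((↑) : ℕ → ℚ)

lemma Aset_sum (p : ℕ) : (Aset p).sum = sigq p := rfl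

lemma Aset_card (p : ℕ) : Multiset.card (Aset p) = p - 1 := by
  simp [Aset, Nat.card_Icc]

lemma Aset_succ (p : ℕ) (h : 1 ≤ p) : Aset (p+1) = ((p:ℚ)+1) ::ₘ Aset p := by
  have h1 : Finset.Icc 2 (p+1) = insert (p+1) (Finset.Icc 2 p) := by
    ext i; simp [Finset.mem_Icc, Finset.mem_insert]; omega
  have h2 : (p+1) ∉ Finset.Icc 2 p := by simp
  rw [Aset, h1, Finset.insert_val_of_notMem h2, Multiset.map_cons]
  push_cast
  rfl

lemma pair_eq_pair {a b c d : ℕ} :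
    ({a, b} : Multiset ℕ) = {c, d} ↔ (a = c ∧ b = d) ∨ (a = d ∧ b = c) := by
  constructor
  · intro h
    have ha : a ∈ ({c, d} : Multiset ℕ) := by rw [← h]; simp
    simp only [Multiset.insert_eq_cons, Multiset.mem_cons, Multiset.mem_singleton] at ha
    rcases ha with rfl | rfl
    · exact Or.inl ⟨rfl, by simpa using (Multiset.cons_inj_right a).mp h⟩
    · refine Or.inr ⟨rfl, ?_⟩
      have hcd : ({c, a} : Multiset ℕ) = a ::ₘ {c} := by
        refine Multiset.ext.mpr fun i => ?_
        simp only [Multiset.insert_eq_cons, Multiset.count_cons, Multiset.count_singleton]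
        split_ifs <;> omega
      rw [hcd] at h
      simpa using (Multiset.cons_inj_right a).mp h
  · rintro (⟨rfl, rfl⟩ | ⟨rfl, rfl⟩)
    · rfl
    · refine Multiset.ext.mpr fun i => ?_
      simp only [Multiset.insert_eq_cons, Multiset.count_cons, Multiset.count_singleton]
      split_ifs <;> omega

lemma triple_eq_triple {x y z a b c : ℕ} :
    ({x, y, z} : Multiset ℕ) = {a, b, c} ↔
      (x = a ∧ y = b ∧ z = c) ∨ (x = a ∧ y = c ∧ z = b) ∨
      (x = b ∧ y = a ∧ z = c) ∨ (x = b ∧ y = c ∧ z = a) ∨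
      (x = c ∧ y = a ∧ z = b) ∨ (x = c ∧ y = b ∧ z = a) := by
  have shuffle : ∀ u v w : ℕ, ({u, v, w} : Multiset ℕ) = w ::ₘ {u, v} ∧
      ({u, v, w} : Multiset ℕ) = v ::ₘ {u, w} := by
    intro u v w
    constructor <;>
    · refine Multiset.ext.mpr fun i => ?_
      simp only [Multiset.insert_eq_cons, Multiset.count_cons, Multiset.count_singleton]
      split_ifs <;> omega
  constructor
  · intro h
    have hx : x ∈ ({a, b, c} : Multiset ℕ) := by rw [← h]; simp
    simp only [Multiset.insert_eq_cons, Multiset.mem_cons, Multiset.mem_singleton] at hx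
    have hxc : ({x, y, z} : Multiset ℕ) = x ::ₘ {y, z} := rfl
    rcases hx with rfl | rfl | rfl
    · rw [hxc] at h
      have h2 := (Multiset.cons_inj_right (x : ℕ)).mp h
      rcases pair_eq_pair.mp h2 with ⟨rfl, rfl⟩ | ⟨rfl, rfl⟩
      · exact Or.inl ⟨rfl, rfl, rfl⟩
      · exact Or.inr (Or.inl ⟨rfl, rfl, rfl⟩)
    · rw [hxc, (shuffle a x c).2] at h
      have h2 := (Multiset.cons_inj_right (x : ℕ)).mp h
      rcases pair_eq_pair.mp h2 with ⟨rfl, rfl⟩ | ⟨rfl, rfl⟩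
      · exact Or.inr (Or.inr (Or.inl ⟨rfl, rfl, rfl⟩))
      · exact Or.inr (Or.inr (Or.inr (Or.inl ⟨rfl, rfl, rfl⟩)))
    · rw [hxc, (shuffle a b x).1] at h
      have h2 := (Multiset.cons_inj_right (x : ℕ)).mp h
      rcases pair_eq_pair.mp h2 with ⟨rfl, rfl⟩ | ⟨rfl, rfl⟩
      · exact Or.inr (Or.inr (Or.inr (Or.inr (Or.inl ⟨rfl, rfl, rfl⟩))))
      · exact Or.inr (Or.inr (Or.inr (Or.inr (Or.inr ⟨rfl, rfl, rfl⟩))))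
  · rintro (⟨rfl, rfl, rfl⟩ | ⟨rfl, rfl, rfl⟩ | ⟨rfl, rfl, rfl⟩ | ⟨rfl, rfl, rfl⟩ |
      ⟨rfl, rfl, rfl⟩ | ⟨rfl, rfl, rfl⟩) <;>
    · refine Multiset.ext.mpr fun i => ?_
      simp only [Multiset.insert_eq_cons, Multiset.count_cons,
        Multiset.count_singleton] <;> (split_ifs <;> omega)



lemma eOpen_eq (p : ℕ) : eOpen (p + 2) = ((Aset p).map (fun t => X - C t)).prod := by
  rw [eOpen, show p + 2 - 2 = p from by omega, Finset.prod_eq_multiset_prod, Aset,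
    Multiset.map_map]
  apply congrArg
  apply Multiset.map_congr rfl
  intro j _
  simp


lemma map_sub_one_sum (s : Multiset ℕ) (h : ∀ p ∈ s, 1 ≤ p) :
    (s.map (fun p => p - 1)).sum + Multiset.card s = s.sum := by
  induction s using Multiset.induction_on with
  | empty => simp
  | cons a t ih =>
    have ha := h a (Multiset.mem_cons_self a t)
    have ih' := ih (fun p hp => h p (Multiset.mem_cons_of_mem hp))
    simp only [Multiset.map_cons, Multiset.sum_cons, Multiset.card_cons]
    omega

lemma card_bind_Aset {M : ℕ} (lam : Nat.Partition M) :
    Multiset.card (lam.parts.bind Aset) = M - lam.parts.card := by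
  have h1 : Multiset.card (lam.parts.bind Aset) = (lam.parts.map (fun p => p - 1)).sum := by
    rw [Multiset.card_bind]
    congr 1
    apply Multiset.map_congr rfl
    intro p _
    simp [Aset, Nat.card_Icc]
  have h2 := map_sub_one_sum lam.parts (fun p hp => lam.parts_pos hp)
  rw [lam.parts_sum] at h2
  omega

lemma card_le_of_partition {M : ℕ} (lam : Nat.Partition M) : lam.parts.card ≤ M := by
  have h2 := map_sub_one_sum lam.parts (fun p hp => lam.parts_pos hp)
  rw [lam.parts_sum] at h2
  omega

lemma prod_eq {M : ℕ} (lam : Nat.Partition M) :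
    ∏ i ∈ Finset.Icc 1 M, eOpen (i + 2) ^ (lam.parts.count i)
      = ((lam.parts.bind Aset).map (fun t => X - C t)).prod := by
  rw [Multiset.map_bind, Multiset.prod_bind]
  have h1 : (lam.parts.map fun p => ((Aset p).map fun t => X - C t).prod).prod
      = (lam.parts.map fun p => eOpen (p + 2)).prod := by
    congr 1
    apply Multiset.map_congr rfl
    intro p _
    rw [eOpen_eq]
  rw [h1, Finset.prod_multiset_map_count]
  have hsub : lam.parts.toFinset ⊆ Finset.Icc 1 M := by
    intro i hi
    rw [Multiset.mem_toFinset] at hi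
    have h1 := lam.parts_pos hi
    have h2 : i ≤ lam.parts.sum := Multiset.le_sum_of_mem hi
    rw [lam.parts_sum] at h2
    simp [Finset.mem_Icc]
    omega
  refine (Finset.prod_subset hsub fun i _ hnotin => ?_).symm
  rw [Multiset.count_eq_zero_of_notMem (fun hm => hnotin (Multiset.mem_toFinset.mpr hm)),
    pow_zero]

noncomputable def Dfac (M : ℕ) (s : Multiset ℕ) : ℚ :=
  ∏ i ∈ Finset.Icc 1 M, ((s.count i).factorial : ℚ)

lemma Dfac_singleton (M a : ℕ) : Dfac M {a} = 1 :=
  Finset.prod_eq_one fun i _ => by by_cases h : i = a <;> simp [Multiset.count_singleton, h]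

lemma Dfac_pair (M : ℕ) {a b : ℕ} (hne : a ≠ b) : Dfac M {a, b} = 1 := by
  refine Finset.prod_eq_one fun i _ => ?_
  simp only [Multiset.insert_eq_cons, Multiset.count_cons, Multiset.count_singleton]
  split_ifs <;> first | omega | norm_num
lemma Dfac_pair_same (M : ℕ) {a : ℕ} (ha : a ∈ Finset.Icc 1 M) : Dfac M {a, a} = 2 := by
  refine Finset.prod_eq_single_of_mem a ha (fun i _ hne => ?_) |>.trans ?_
  · simp only [Multiset.insert_eq_cons, Multiset.count_cons, Multiset.count_singleton]
    split_ifs <;> first | omega | norm_num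
  · simp only [Multiset.insert_eq_cons, Multiset.count_cons, Multiset.count_singleton]
    norm_num

lemma Dfac_triple_distinct (M : ℕ) {a b c : ℕ} (hab : a ≠ b) (hac : a ≠ c) (hbc : b ≠ c) :
    Dfac M {a, b, c} = 1 := by
  refine Finset.prod_eq_one fun i _ => ?_
  simp only [Multiset.insert_eq_cons, Multiset.count_cons, Multiset.count_singleton]
  split_ifs <;> first | omega | norm_num

lemma Dfac_triple_aab (M : ℕ) {a c : ℕ} (ha : a ∈ Finset.Icc 1 M) (hac : a ≠ c) :
    Dfac M {a, a, c} = 2 := by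
  refine Finset.prod_eq_single_of_mem a ha (fun i _ hne => ?_) |>.trans ?_
  · simp only [Multiset.insert_eq_cons, Multiset.count_cons, Multiset.count_singleton]
    split_ifs <;> first | omega | norm_num
  · simp only [Multiset.insert_eq_cons, Multiset.count_cons, Multiset.count_singleton]
    split_ifs <;> first | omega | norm_num

lemma Dfac_triple_aba (M : ℕ) {a b : ℕ} (ha : a ∈ Finset.Icc 1 M) (hab : a ≠ b) :
    Dfac M {a, b, a} = 2 := by
  refine Finset.prod_eq_single_of_mem a ha (fun i _ hne => ?_) |>.trans ?_
  · simp only [Multiset.insert_eq_cons, Multiset.count_cons, Multiset.count_singleton]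
    split_ifs <;> first | omega | norm_num
  · simp only [Multiset.insert_eq_cons, Multiset.count_cons, Multiset.count_singleton]
    split_ifs <;> first | omega | norm_num

lemma Dfac_triple_abb (M : ℕ) {a b : ℕ} (hb : b ∈ Finset.Icc 1 M) (hab : a ≠ b) :
    Dfac M {a, b, b} = 2 := by
  refine Finset.prod_eq_single_of_mem b hb (fun i _ hne => ?_) |>.trans ?_
  · simp only [Multiset.insert_eq_cons, Multiset.count_cons, Multiset.count_singleton]
    split_ifs <;> first | omega | norm_num
  · simp only [Multiset.insert_eq_cons, Multiset.count_cons, Multiset.count_singleton]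
    split_ifs <;> first | omega | norm_num

lemma Dfac_triple_all (M : ℕ) {a : ℕ} (ha : a ∈ Finset.Icc 1 M) :
    Dfac M {a, a, a} = 6 := by
  refine Finset.prod_eq_single_of_mem a ha (fun i _ hne => ?_) |>.trans ?_
  · simp only [Multiset.insert_eq_cons, Multiset.count_cons, Multiset.count_singleton]
    split_ifs <;> first | omega | norm_num
  · simp only [Multiset.insert_eq_cons, Multiset.count_cons, Multiset.count_singleton]
    norm_num [Nat.factorial]

lemma esymm_cons_two (a : ℚ) (s : Multiset ℚ) :
    (a ::ₘ s).esymm 2 = s.esymm 2 + a * s.sum := by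
  have h := esymm_cons a s 1
  rw [esymm_one'] at h
  norm_num at h
  exact h

lemma Aset_one : Aset 1 = 0 := by
  rw [Aset, Finset.Icc_eq_empty (by omega)]
  rfl

lemma esymm2_Aset : ∀ p : ℕ, (Aset (p+3)).esymm 2 =
    (((p:ℚ)+3)^2*((p:ℚ)+4)^2/4 - ((p:ℚ)+3)*((p:ℚ)+4)*(2*(p:ℚ)+7)/6)/2
      - (((p:ℚ)+3)*((p:ℚ)+4)/2 - 1) := by
  intro p
  induction p with
  | zero =>
    have h2 : Aset 2 = (2:ℚ) ::ₘ 0 := by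
      rw [show (2:ℕ) = 1+1 from rfl, Aset_succ 1 le_rfl, Aset_one]
      norm_num
    have h3 : Aset 3 = (3:ℚ) ::ₘ (2:ℚ) ::ₘ 0 := by
      rw [show (3:ℕ) = 2+1 from rfl, Aset_succ 2 (by norm_num), h2]
      norm_num
    rw [show (0:ℕ)+3 = 3 from rfl, h3, esymm_cons_two, esymm_cons_two]
    rw [show (0:Multiset ℚ).esymm 2 = 0 from esymm_nil 1]
    norm_num
  | succ q ih =>
    rw [show q+1+3 = (q+3)+1 from rfl, Aset_succ (q+3) (by omega), esymm_cons_two, ih,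
      Aset_sum, show q+3 = (q+2)+1 from rfl, sigq_succ]
    push_cast
    ring

noncomputable def Gm (m : ℕ) (s : Multiset ℕ) : ℚ :=
  (((m + 3 + Multiset.card s).factorial : ℚ) / (((m + 4).factorial : ℚ) * Dfac (m + 3) s)) *
    (((s.bind Aset).map (fun t => X - C t)).prod.coeff m)

lemma F_eq_G (m : ℕ) (lam : Nat.Partition (m + 3)) :
    Pcoeff (m + 5) lam * (((lam.parts.bind Aset).map (fun t => X - C t)).prod.coeff m)
      = Gm m lam.parts := rfl

lemma G_card_big (m : ℕ) (s : Multiset ℕ) (h4 : 4 ≤ Multiset.card s)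
    (hle : Multiset.card s ≤ m + 3)
    (hc : Multiset.card (s.bind Aset) = m + 3 - Multiset.card s) :
    Gm m s = 0 := by
  rw [Gm, Polynomial.coeff_eq_zero_of_natDegree_lt, mul_zero]
  rw [Polynomial.natDegree_multiset_prod_X_sub_C_eq_card, hc]
  omega

lemma fact_ratio_1 {d : ℚ} (m : ℕ) :
    ((m + 4).factorial : ℚ) / (((m + 4).factorial : ℚ) * d) = 1 / d := by
  have hf : ((m + 4).factorial : ℚ) ≠ 0 := by positivity
  have := mul_div_mul_left (1:ℚ) d hf
  simpa using this

lemma G_single (m : ℕ) : Gm m {m + 3} = (Aset (m + 3)).esymm 2 := by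
  have hD : Dfac (m + 3) {m + 3} = 1 := Dfac_singleton (m+3) (m+3)
  rw [Gm, Multiset.singleton_bind, hD]
  have hcard : Multiset.card ({m + 3} : Multiset ℕ) = 1 := rfl
  rw [hcard]
  have hA : Multiset.card (Aset (m + 3)) = m + 2 := by rw [Aset_card]; omega
  have hco := Multiset.prod_X_sub_C_coeff (Aset (m + 3)) (k := m) (by rw [hA]; omega)
  rw [hA] at hco
  rw [show m + 2 - m = 2 from by omega] at hco
  rw [hco, show m + 3 + 1 = m + 4 from rfl, mul_one, div_self (by positivity : ((m+4).factorial:ℚ) ≠ 0)]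
  norm_num

lemma G_pair (m a b : ℕ) (ha : 1 ≤ a) (hb : 1 ≤ b) (hab : a + b = m + 3) :
    Gm m {a, b} = ((m + 5 : ℚ) / Dfac (m + 3) {a, b}) * (-(sigq a + sigq b)) := by
  have hbind : (({a, b} : Multiset ℕ).bind Aset) = Aset a + Aset b := by
    rw [Multiset.insert_eq_cons, Multiset.cons_bind, Multiset.singleton_bind]
  have hcard : Multiset.card (Aset a + Aset b) = m + 1 := by
    rw [Multiset.card_add, Aset_card, Aset_card]; omega
  have hco := Multiset.prod_X_sub_C_coeff (Aset a + Aset b) (k := m) (by rw [hcard]; omega)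
  rw [hcard, show m + 1 - m = 1 from by omega, esymm_one', Multiset.sum_add,
    Aset_sum, Aset_sum] at hco
  rw [Gm, hbind, hco, show Multiset.card ({a, b} : Multiset ℕ) = 2 from rfl,
    show m + 3 + 2 = m + 4 + 1 from rfl, Nat.factorial_succ]
  have hf : ((m + 4).factorial : ℚ) ≠ 0 := by positivity
  push_cast
  rw [show ((m:ℚ) + 4 + 1) * ((m + 4).factorial : ℚ) / (((m + 4).factorial : ℚ) * Dfac (m + 3) {a, b})
      = ((m + 4 : ℚ) + 1) / Dfac (m + 3) {a, b} from by
    rw [mul_comm ((m:ℚ) + 4 + 1) _, mul_div_mul_left _ _ hf]]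
  ring

lemma G_triple (m a b c : ℕ) (ha : 1 ≤ a) (hb : 1 ≤ b) (hc : 1 ≤ c) (habc : a + b + c = m + 3) :
    Gm m {a, b, c} = (m + 5 : ℚ) * (m + 6) / Dfac (m + 3) {a, b, c} := by
  have hbind : (({a, b, c} : Multiset ℕ).bind Aset) = Aset a + (Aset b + Aset c) := by
    rw [Multiset.insert_eq_cons, Multiset.cons_bind, Multiset.insert_eq_cons,
      Multiset.cons_bind, Multiset.singleton_bind]
  have hcard : Multiset.card (Aset a + (Aset b + Aset c)) = m := by
    rw [Multiset.card_add, Multiset.card_add, Aset_card, Aset_card, Aset_card]; omega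
  have hco := Multiset.prod_X_sub_C_coeff (Aset a + (Aset b + Aset c)) (k := m)
    (by rw [hcard])
  rw [hcard, show m - m = 0 from by omega, esymm_zero'] at hco
  rw [Gm, hbind, hco, show Multiset.card ({a, b, c} : Multiset ℕ) = 3 from rfl,
    show m + 3 + 3 = m + 4 + 1 + 1 from rfl, Nat.factorial_succ, Nat.factorial_succ]
  have hf : ((m + 4).factorial : ℚ) ≠ 0 := by positivity
  push_cast
  rw [pow_zero, mul_one, mul_one]
  rw [show ((m:ℚ) + 5 + 1) * (((m:ℚ) + 4 + 1) * ((m + 4).factorial : ℚ))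
      = ((m + 4).factorial : ℚ) * (((m:ℚ) + 5 + 1) * ((m:ℚ) + 4 + 1)) from by ring,
    mul_div_mul_left _ _ hf]
  ring

lemma himg1 (m : ℕ) :
    ((Finset.univ : Finset (Nat.Partition (m+3))).filter (fun l => Multiset.card l.parts = 1)).image
      (fun l => l.parts) = {({m+3} : Multiset ℕ)} := by
  ext s
  simp only [Finset.mem_image, Finset.mem_filter, Finset.mem_univ, true_and,
    Finset.mem_singleton]
  constructor
  · rintro ⟨l, hcard, rfl⟩
    obtain ⟨a, hpa⟩ := Multiset.card_eq_one.mp hcard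
    have hsum := l.parts_sum
    rw [hpa] at hsum ⊢
    simp only [Multiset.sum_singleton] at hsum
    rw [hsum]
  · rintro rfl
    exact ⟨⟨{m+3}, by intro i hi; simp at hi; omega, by simp⟩, by simp, rfl⟩

lemma himg2 (m : ℕ) :
    ((Finset.univ : Finset (Nat.Partition (m+3))).filter (fun l => Multiset.card l.parts = 2)).image
      (fun l => l.parts)
    = (Finset.Icc 1 (m+2)).image (fun x => ({x, m+3-x} : Multiset ℕ)) := by
  ext s
  simp only [Finset.mem_image, Finset.mem_filter, Finset.mem_univ, true_and, Finset.mem_Icc]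
  constructor
  · rintro ⟨l, hcard, rfl⟩
    obtain ⟨a, b, hpa⟩ := Multiset.card_eq_two.mp hcard
    have hsum := l.parts_sum
    have hapos : 0 < a := l.parts_pos (by rw [hpa]; simp)
    have hbpos : 0 < b := l.parts_pos (by rw [hpa]; simp)
    rw [hpa] at hsum ⊢
    simp only [Multiset.insert_eq_cons, Multiset.sum_cons, Multiset.sum_singleton] at hsum
    refine ⟨a, ⟨by omega, by omega⟩, ?_⟩
    rw [pair_eq_pair]
    left
    omega
  · rintro ⟨x, ⟨hx1, hx2⟩, rfl⟩
    refine ⟨⟨{x, m+3-x}, ?_, ?_⟩, rfl, rfl⟩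
    · intro i hi
      simp only [Multiset.insert_eq_cons, Multiset.mem_cons, Multiset.mem_singleton] at hi
      rcases hi with rfl | rfl <;> omega
    · simp only [Multiset.insert_eq_cons, Multiset.sum_cons, Multiset.sum_singleton]
      omega

lemma himg3 (m : ℕ) :
    ((Finset.univ : Finset (Nat.Partition (m+3))).filter (fun l => Multiset.card l.parts = 3)).image
      (fun l => l.parts)
    = (((Finset.Icc 1 (m+3)) ×ˢ (Finset.Icc 1 (m+3))).filter (fun p => p.1 + p.2 ≤ m+2)).image
        (fun p => ({p.1, p.2, m+3-p.1-p.2} : Multiset ℕ)) := by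
  ext s
  simp only [Finset.mem_image, Finset.mem_filter, Finset.mem_univ, true_and,
    Finset.mem_product, Finset.mem_Icc]
  constructor
  · rintro ⟨l, hcard, rfl⟩
    obtain ⟨a, b, c, hpa⟩ := Multiset.card_eq_three.mp hcard
    have hsum := l.parts_sum
    have hapos : 0 < a := l.parts_pos (by rw [hpa]; simp)
    have hbpos : 0 < b := l.parts_pos (by rw [hpa]; simp)
    have hcpos : 0 < c := l.parts_pos (by rw [hpa]; simp)
    rw [hpa] at hsum ⊢
    simp only [Multiset.insert_eq_cons, Multiset.sum_cons, Multiset.sum_singleton] at hsum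
    refine ⟨(a, b), ⟨⟨by omega, by omega⟩, by omega⟩, ?_⟩
    rw [triple_eq_triple]
    left
    omega
  · rintro ⟨⟨x, y⟩, ⟨⟨hx, hy⟩, hxy⟩, rfl⟩
    refine ⟨⟨{x, y, m+3-x-y}, ?_, ?_⟩, rfl, rfl⟩
    · intro i hi
      simp only [Multiset.insert_eq_cons, Multiset.mem_cons, Multiset.mem_singleton] at hi
      rcases hi with rfl | rfl | rfl <;> omega
    · simp only [Multiset.insert_eq_cons, Multiset.sum_cons, Multiset.sum_singleton]
      omega

lemma fib2 (m x : ℕ) (hx : x ∈ Finset.Icc 1 (m+2)) :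
    Gm m {x, m+3-x} = ∑ j ∈ (Finset.Icc 1 (m+2)).filter
        (fun j => ({j, m+3-j} : Multiset ℕ) = {x, m+3-x}),
      (-((m+5:ℚ)/2) * (sigq j + sigq (m+3-j))) := by
  simp only [Finset.mem_Icc] at hx
  by_cases hc : 2 * x = m + 3
  · have hx2 : m + 3 - x = x := by omega
    have hfil : (Finset.Icc 1 (m+2)).filter
        (fun j => ({j, m+3-j} : Multiset ℕ) = {x, m+3-x}) = {x} := by
      ext j
      simp only [Finset.mem_filter, Finset.mem_Icc, pair_eq_pair, Finset.mem_singleton]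
      omega
    rw [hfil, Finset.sum_singleton, hx2, G_pair m x x (by omega) (by omega) (by omega),
      Dfac_pair_same (m+3) (by simp only [Finset.mem_Icc]; omega)]
    ring
  · have hne : x ≠ m + 3 - x := by omega
    have hfil : (Finset.Icc 1 (m+2)).filter
        (fun j => ({j, m+3-j} : Multiset ℕ) = {x, m+3-x}) = {x, m+3-x} := by
      ext j
      simp only [Finset.mem_filter, Finset.mem_Icc, pair_eq_pair, Finset.mem_insert,
        Finset.mem_singleton]
      omega
    rw [hfil, Finset.sum_insert (by simp only [Finset.mem_singleton]; omega),
      Finset.sum_singleton, G_pair m x (m+3-x) (by omega) (by omega) (by omega),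
      Dfac_pair (m+3) hne, show m + 3 - (m + 3 - x) = x from by omega]
    ring

set_option maxHeartbeats 1000000 in
lemma fib3 (m a b : ℕ) (ha : 1 ≤ a) (hb : 1 ≤ b) (hab : a + b ≤ m + 2) :
    Gm m {a, b, m+3-a-b} = ∑ _q ∈ (((Finset.Icc 1 (m+3)) ×ˢ (Finset.Icc 1 (m+3))).filter
        (fun q => q.1 + q.2 ≤ m + 2)).filter
        (fun q => ({q.1, q.2, m+3-q.1-q.2} : Multiset ℕ) = {a, b, m+3-a-b}),
      ((m+5:ℚ) * (m+6) / 6) := by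
  have hamem : a ∈ Finset.Icc 1 (m+3) := by simp only [Finset.mem_Icc]; omega
  have hbmem : b ∈ Finset.Icc 1 (m+3) := by simp only [Finset.mem_Icc]; omega
  have hG := G_triple m a b (m+3-a-b) ha hb (by omega) (by omega)
  have key : ∀ u v : ℕ, ((u, v) ∈ (((Finset.Icc 1 (m+3)) ×ˢ (Finset.Icc 1 (m+3))).filter
        (fun q => q.1 + q.2 ≤ m + 2)).filter
        (fun q => ({q.1, q.2, m+3-q.1-q.2} : Multiset ℕ) = {a, b, m+3-a-b}))
      ↔ ((u = a ∧ v = b) ∨ (u = a ∧ v = m+3-a-b) ∨ (u = b ∧ v = a) ∨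
          (u = b ∧ v = m+3-a-b) ∨ (u = m+3-a-b ∧ v = a) ∨ (u = m+3-a-b ∧ v = b)) := by
    intro u v
    simp only [Finset.mem_filter, Finset.mem_product, Finset.mem_Icc, triple_eq_triple]
    omega
  by_cases h1 : a = b <;> by_cases h2 : a = m+3-a-b <;> by_cases h3 : b = m+3-a-b
  · -- a = b = c
    have hfil : (((Finset.Icc 1 (m+3)) ×ˢ (Finset.Icc 1 (m+3))).filter
        (fun q => q.1 + q.2 ≤ m + 2)).filter
        (fun q => ({q.1, q.2, m+3-q.1-q.2} : Multiset ℕ) = {a, b, m+3-a-b})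
        = {(a, a)} := by
      ext ⟨u, v⟩
      rw [key]
      simp only [Finset.mem_singleton, Prod.mk.injEq]
      omega
    have hD : Dfac (m+3) {a, b, m+3-a-b} = 6 := by
      rw [show b = a from h1.symm, show m+3-a-a = a from by omega]
      exact Dfac_triple_all (m+3) hamem
    rw [hfil, Finset.sum_singleton, hG, hD]
  · exact absurd (by omega : b = m+3-a-b) h3
  · exact absurd (by omega : a = m+3-a-b) h2
  · -- a = b ≠ c
    have hfil : (((Finset.Icc 1 (m+3)) ×ˢ (Finset.Icc 1 (m+3))).filter
        (fun q => q.1 + q.2 ≤ m + 2)).filter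
        (fun q => ({q.1, q.2, m+3-q.1-q.2} : Multiset ℕ) = {a, b, m+3-a-b})
        = {(a, a), (a, m+3-a-b), (m+3-a-b, a)} := by
      ext ⟨u, v⟩
      rw [key]
      simp only [Finset.mem_insert, Finset.mem_singleton, Prod.mk.injEq]
      omega
    have hD : Dfac (m+3) {a, b, m+3-a-b} = 2 := by
      rw [show b = a from h1.symm]
      exact Dfac_triple_aab (m+3) hamem (by omega)
    rw [hfil, Finset.sum_insert (by
        simp only [Finset.mem_insert, Finset.mem_singleton, Prod.mk.injEq, not_or]; omega),
      Finset.sum_insert (by simp only [Finset.mem_singleton, Prod.mk.injEq, not_and]; omega),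
      Finset.sum_singleton, hG, hD]
    ring
  · exact absurd (by omega : a = b) h1
  · -- a = c ≠ b
    have hfil : (((Finset.Icc 1 (m+3)) ×ˢ (Finset.Icc 1 (m+3))).filter
        (fun q => q.1 + q.2 ≤ m + 2)).filter
        (fun q => ({q.1, q.2, m+3-q.1-q.2} : Multiset ℕ) = {a, b, m+3-a-b})
        = {(a, b), (b, a), (a, a)} := by
      ext ⟨u, v⟩
      rw [key]
      simp only [Finset.mem_insert, Finset.mem_singleton, Prod.mk.injEq]
      omega
    have hD : Dfac (m+3) {a, b, m+3-a-b} = 2 := by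
      rw [show m+3-a-b = a from h2.symm]
      exact Dfac_triple_aba (m+3) hamem h1
    rw [hfil, Finset.sum_insert (by
        simp only [Finset.mem_insert, Finset.mem_singleton, Prod.mk.injEq, not_or]; omega),
      Finset.sum_insert (by simp only [Finset.mem_singleton, Prod.mk.injEq, not_and]; omega),
      Finset.sum_singleton, hG, hD]
    ring
  · -- b = c ≠ a
    have hfil : (((Finset.Icc 1 (m+3)) ×ˢ (Finset.Icc 1 (m+3))).filter
        (fun q => q.1 + q.2 ≤ m + 2)).filter
        (fun q => ({q.1, q.2, m+3-q.1-q.2} : Multiset ℕ) = {a, b, m+3-a-b})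
        = {(a, b), (b, a), (b, b)} := by
      ext ⟨u, v⟩
      rw [key]
      simp only [Finset.mem_insert, Finset.mem_singleton, Prod.mk.injEq]
      omega
    have hD : Dfac (m+3) {a, b, m+3-a-b} = 2 := by
      rw [show m+3-a-b = b from h3.symm]
      exact Dfac_triple_abb (m+3) hbmem h1
    rw [hfil, Finset.sum_insert (by
        simp only [Finset.mem_insert, Finset.mem_singleton, Prod.mk.injEq, not_or]; omega),
      Finset.sum_insert (by simp only [Finset.mem_singleton, Prod.mk.injEq, not_and]; omega),
      Finset.sum_singleton, hG, hD]
    ring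
  · -- all distinct
    have hfil : (((Finset.Icc 1 (m+3)) ×ˢ (Finset.Icc 1 (m+3))).filter
        (fun q => q.1 + q.2 ≤ m + 2)).filter
        (fun q => ({q.1, q.2, m+3-q.1-q.2} : Multiset ℕ) = {a, b, m+3-a-b})
        = {(a, b), (a, m+3-a-b), (b, a), (b, m+3-a-b), (m+3-a-b, a), (m+3-a-b, b)} := by
      ext ⟨u, v⟩
      rw [key]
      simp only [Finset.mem_insert, Finset.mem_singleton, Prod.mk.injEq] <;> omega
    have hD : Dfac (m+3) {a, b, m+3-a-b} = 1 :=
      Dfac_triple_distinct (m+3) h1 h2 h3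
    rw [hfil]
    rw [Finset.sum_insert (by
        simp only [Finset.mem_insert, Finset.mem_singleton, Prod.mk.injEq, not_or]; omega)]
    rw [Finset.sum_insert (by
        simp only [Finset.mem_insert, Finset.mem_singleton, Prod.mk.injEq, not_or]; omega)]
    rw [Finset.sum_insert (by
        simp only [Finset.mem_insert, Finset.mem_singleton, Prod.mk.injEq, not_or]; omega)]
    rw [Finset.sum_insert (by
        simp only [Finset.mem_insert, Finset.mem_singleton, Prod.mk.injEq, not_or]; omega)]
    rw [Finset.sum_insert (by simp only [Finset.mem_singleton, Prod.mk.injEq, not_and]; omega)]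
    rw [Finset.sum_singleton, hG, hD]
    ring

set_option maxHeartbeats 1000000 in
theorem betti_two (n : ℕ) (hn : 5 ≤ n) :
    (eDelta n).coeff (n - 5) = (Nat.choose (n - 1) 4 : ℚ) := by
  obtain ⟨m, rfl⟩ : ∃ m, n = m + 5 := ⟨n - 5, by omega⟩
  show (eDelta (m+5)).coeff m = ((m+4).choose 4 : ℚ)
  -- Step 1: express as a sum of Gm over partitions
  have step : (eDelta (m+5)).coeff m
      = ∑ lam ∈ (Finset.univ : Finset (Nat.Partition (m+3))), Gm m lam.parts := by
    show (∑ lam : Nat.Partition (m+3),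
        Pcoeff (m+5) lam • ∏ i ∈ Finset.Icc 1 (m+3), (eOpen (i + 2)) ^ (lam.parts.count i)).coeff m
      = _
    rw [Polynomial.finset_sum_coeff]
    refine Finset.sum_congr rfl fun lam _ => ?_
    rw [Polynomial.coeff_smul, smul_eq_mul, prod_eq lam, F_eq_G]
  rw [step]
  -- Step 2: restrict to partitions with 1, 2 or 3 parts
  have hzero : ∀ lam ∈ (Finset.univ : Finset (Nat.Partition (m+3))),
      Gm m lam.parts ≠ 0 → (Multiset.card lam.parts = 1 ∨ Multiset.card lam.parts = 2 ∨
        Multiset.card lam.parts = 3) := by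
    intro lam _ hne
    by_contra hcon
    push_neg at hcon
    have hle := card_le_of_partition lam
    have h0 : Multiset.card lam.parts ≠ 0 := by
      intro h
      have h1 := Multiset.card_eq_zero.mp h
      have hs := lam.parts_sum
      rw [h1] at hs
      simp at hs
    exact hne (G_card_big m lam.parts (by omega) (by omega) (card_bind_Aset lam))
  rw [← Finset.sum_filter_of_ne hzero]
  rw [Finset.filter_or, Finset.sum_union (by
    rw [Finset.disjoint_left]
    intro l h1 h2
    simp only [Finset.mem_filter, Finset.mem_univ, true_and] at h1 h2
    omega)]
  rw [Finset.filter_or, Finset.sum_union (by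
    rw [Finset.disjoint_left]
    intro l h1 h2
    simp only [Finset.mem_filter, Finset.mem_univ, true_and] at h1 h2
    omega)]
  have hinj : ∀ (P : Finset (Nat.Partition (m+3))), ∀ x ∈ P, ∀ y ∈ P,
      x.parts = y.parts → x = y := fun _ x _ y _ h => Nat.Partition.ext h
  -- card 1 sum
  have hs1 : ∑ lam ∈ (Finset.univ : Finset (Nat.Partition (m+3))).filter
        (fun l => Multiset.card l.parts = 1), Gm m lam.parts
      = (Aset (m + 3)).esymm 2 := by
    rw [← Finset.sum_image (hinj _), himg1, Finset.sum_singleton, G_single]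
  -- card 2 sum
  have hs2 : ∑ lam ∈ (Finset.univ : Finset (Nat.Partition (m+3))).filter
        (fun l => Multiset.card l.parts = 2), Gm m lam.parts
      = ∑ x ∈ Finset.Icc 1 (m+2), (-((m+5:ℚ)/2) * (sigq x + sigq (m+3-x))) := by
    rw [← Finset.sum_image (hinj _), himg2]
    exact Finset.sum_image' _ fun x hx => fib2 m x hx
  -- card 3 sum
  have hs3 : ∑ lam ∈ (Finset.univ : Finset (Nat.Partition (m+3))).filter
        (fun l => Multiset.card l.parts = 3), Gm m lam.parts
      = ∑ _q ∈ ((Finset.Icc 1 (m+3)) ×ˢ (Finset.Icc 1 (m+3))).filter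
          (fun p => p.1 + p.2 ≤ m+2), ((m+5:ℚ) * (m+6) / 6) := by
    rw [← Finset.sum_image (hinj _), himg3]
    refine Finset.sum_image' _ fun p hp => ?_
    obtain ⟨a, b⟩ := p
    simp only [Finset.mem_filter, Finset.mem_product, Finset.mem_Icc] at hp
    exact fib3 m a b (by omega) (by omega) (by omega)
  rw [hs1, hs2, hs3]
  -- evaluate the card-2 scalar sum
  have hA2 : ∑ x ∈ Finset.Icc 1 (m+2), (-((m+5:ℚ)/2) * (sigq x + sigq (m+3-x)))
      = -((m+5:ℚ)/2) * ((m+2:ℚ)*((m+2:ℚ)^2+3*(m+2:ℚ)-4)/6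
          + (m+2:ℚ)*((m+2:ℚ)^2+3*(m+2:ℚ)-4)/6) := by
    rw [show Finset.Icc 1 (m+2) = Finset.Ico 1 (m+3) from (Finset.Ico_add_one_right_eq_Icc 1 (m+2)).symm,
      Finset.sum_Ico_eq_sum_range, show m+3-1 = m+2 from rfl]
    have h2 : ∀ j ∈ Finset.range (m+2), -((m+5:ℚ)/2) * (sigq (1+j) + sigq (m+3-(1+j)))
        = -((m+5:ℚ)/2) * (sigq (j+1) + sigq (m+2-1-j+1)) := by
      intro j hj
      simp only [Finset.mem_range] at hj
      rw [show m+3-(1+j) = m+2-1-j+1 from by omega, show 1+j = j+1 from by omega]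
    rw [Finset.sum_congr rfl h2, ← Finset.mul_sum, Finset.sum_add_distrib,
      Finset.sum_range_reflect (fun j => sigq (j+1)) (m+2), sum_sigq]
    push_cast
    ring
  -- evaluate the card-3 scalar sum
  have hcardT3 : ((((Finset.Icc 1 (m+3)) ×ˢ (Finset.Icc 1 (m+3))).filter
      (fun p => p.1 + p.2 ≤ m+2)).card) * 2 = (m+2)*(m+1) := by
    have h1 : (((Finset.Icc 1 (m+3)) ×ˢ (Finset.Icc 1 (m+3))).filter
        (fun p => p.1 + p.2 ≤ m+2)).card = ∑ x ∈ Finset.Icc 1 (m+3), (m+2-x) := by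
      rw [Finset.card_filter, Finset.sum_product]
      refine Finset.sum_congr rfl fun x _ => ?_
      have hf : (Finset.Icc 1 (m+3)).filter (fun y => x + y ≤ m+2) = Finset.Icc 1 (m+2-x) := by
        ext y
        simp only [Finset.mem_filter, Finset.mem_Icc]
        omega
      calc ∑ y ∈ Finset.Icc 1 (m+3), ite (x + y ≤ m+2) 1 0
          = ((Finset.Icc 1 (m+3)).filter (fun y => x + y ≤ m+2)).card :=
            (Finset.card_filter _ _).symm
        _ = (Finset.Icc 1 (m+2-x)).card := by rw [hf]
        _ = m+2-x := by rw [Nat.card_Icc]; omega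
    rw [h1, show Finset.Icc 1 (m+3) = Finset.Ico 1 (m+4) from (Finset.Ico_add_one_right_eq_Icc 1 (m+3)).symm,
      Finset.sum_Ico_eq_sum_range, show m+4-1 = m+3 from rfl]
    have hc2 : ∀ j ∈ Finset.range (m+3), m+2-(1+j) = (m+3-1-j) - 1 := by
      intro j _; omega
    rw [Finset.sum_congr rfl hc2, Finset.sum_range_reflect (fun j => j - 1) (m+3),
      Finset.sum_range_succ']
    have hc3 : ∀ j ∈ Finset.range (m+2), (j + 1) - 1 = j := by intro j _; omega
    rw [Finset.sum_congr rfl hc3]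
    have h5 : (∑ i ∈ Finset.range (m+2), i) * 2 = (m+2)*(m+1) := by
      simpa using Finset.sum_range_id_mul_two (m+2)
    omega
  have hB3 : ∑ _q ∈ ((Finset.Icc 1 (m+3)) ×ˢ (Finset.Icc 1 (m+3))).filter
      (fun p => p.1 + p.2 ≤ m+2), ((m+5:ℚ) * (m+6) / 6)
      = ((m+2:ℚ)*(m+1:ℚ)/2) * ((m+5:ℚ) * (m+6) / 6) := by
    rw [Finset.sum_const, nsmul_eq_mul]
    congr 1
    have : ((((Finset.Icc 1 (m+3)) ×ˢ (Finset.Icc 1 (m+3))).filter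
        (fun p => p.1 + p.2 ≤ m+2)).card * 2 : ℚ) = ((m+2:ℚ))*((m+1:ℚ)) := by
      exact_mod_cast congrArg (fun t : ℕ => (t : ℚ)) hcardT3
    push_cast at this ⊢
    linarith
  -- the choose value
  have hchoose : (((m+4).choose 4 : ℕ) : ℚ)
      = ((m:ℚ)+1)*((m:ℚ)+2)*((m:ℚ)+3)*((m:ℚ)+4)/24 := by
    have h := Nat.choose_mul_factorial_mul_factorial (show 4 ≤ m+4 by omega)
    rw [show m+4-4 = m from by omega, show Nat.factorial 4 = 24 from rfl] at h
    have hq : (((m+4).choose 4 : ℕ) : ℚ) * 24 * (m.factorial : ℚ) = ((m+4).factorial : ℚ) := by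
      exact_mod_cast congrArg (fun t : ℕ => (t : ℚ)) h
    have hfac : ((m+4).factorial : ℚ)
        = ((m:ℚ)+4)*(((m:ℚ)+3)*(((m:ℚ)+2)*(((m:ℚ)+1)*(m.factorial:ℚ)))) := by
      rw [show m+4 = m+3+1 from rfl, Nat.factorial_succ, show m+3 = m+2+1 from rfl,
        Nat.factorial_succ, show m+2 = m+1+1 from rfl, Nat.factorial_succ, Nat.factorial_succ]
      push_cast
      ring
    have hm0 : (m.factorial : ℚ) ≠ 0 := by positivity
    rw [hfac] at hq
    have h2 : (((m+4).choose 4 : ℕ) : ℚ) * 24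
        = ((m:ℚ)+4)*(((m:ℚ)+3)*(((m:ℚ)+2)*((m:ℚ)+1))) := by
      apply mul_right_cancel₀ hm0
      rw [hq]
      ring
    rw [eq_div_iff (by norm_num : (24:ℚ) ≠ 0)]
    linarith
  rw [hA2, hB3, esymm2_Aset m, hchoose]
  push_cast
  ring
end
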